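/- Let d ≥ 1 be an integer, α ∈ (0,2), β ∈ (0,1), and suppose 0 < η ≤ α/(βd). Let G be a measurable kernel satisfying the lower heat-kernel bound, let V₀ : ℝ^d → [0,∞) be measurable and not almost everywhere zero, and let V : (0,∞) × ℝ^d → [0,∞] be a mild solution with initial data V₀. Then for every M > 0 there exists T₀ > 0 such that for all t ≥ T₀ and all x ∈ ℝ^d with |x| ≤ t^{β/α}, V(t,x) ≥ M. -/

import Mathlib

set_option maxHeartbeats 1000000
open MeasureTheory ENNReal

lemma my_holder {X : Type*} [MeasurableSpace X] (μ : Measure X) (f : X → ℝ≥0∞)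
    (hf : AEMeasurable f μ) (η : ℝ) (hη : 0 < η) :
    (∫⁻ x, f x ∂μ) ^ (1 + η) ≤ (∫⁻ x, f x ^ (1 + η) ∂μ) * (μ Set.univ) ^ η := by
  have hp : (1:ℝ) < 1 + η := by linarith
  have hpq : (1+η).HolderConjugate ((1+η)/η) := by
    rw [Real.holderConjugate_iff_eq_conjExponent hp, add_sub_cancel_left]
  have h := ENNReal.lintegral_mul_le_Lp_mul_Lq μ hpq hf aemeasurable_const (g := fun _ => 1)
  simp only [Pi.mul_apply, Pi.one_apply, mul_one, ENNReal.one_rpow, lintegral_const, one_mul] at h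
  have h2 := ENNReal.rpow_le_rpow h (le_of_lt (lt_trans one_pos hp))
  calc (∫⁻ x, f x ∂μ) ^ (1 + η)
      ≤ ((∫⁻ a, f a ^ (1+η) ∂μ) ^ (1/(1+η)) * (μ Set.univ) ^ (1/((1+η)/η))) ^ (1+η) := h2
    _ = (∫⁻ x, f x ^ (1 + η) ∂μ) * (μ Set.univ) ^ η := by
        rw [ENNReal.mul_rpow_of_nonneg _ _ (by linarith : (0:ℝ) ≤ 1+η),
          ← ENNReal.rpow_mul, ← ENNReal.rpow_mul]
        congr 1
        · rw [one_div_mul_cancel (by linarith : (1:ℝ)+η ≠ 0), ENNReal.rpow_one]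
        · congr 1
          field_simp


lemma my_diverge (ψ : ℝ → ℝ≥0∞) (T : ℝ) (hT : 1 ≤ T)
    (mono : ∀ a b : ℝ, a ≤ b → ψ a ≤ ψ b) (δ : ℝ) (hδ : 0 < δ)
    (step : ∀ t, T ≤ t → ψ t + ENNReal.ofReal δ ≤ ψ (2*t)) :
    ∀ C : ℝ, ∃ T', T ≤ T' ∧ ∀ t, T' ≤ t → ENNReal.ofReal C ≤ ψ t := by
  have key : ∀ n : ℕ, ENNReal.ofReal (n * δ) ≤ ψ (2^n * T) := by
    intro n
    induction n with
    | zero => simp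
    | succ n ih =>
      have h1 : T ≤ 2^n * T := le_mul_of_one_le_left (by linarith) (one_le_pow₀ one_le_two)
      have h2 := step _ h1
      have h3 : (2:ℝ)^(n+1) * T = 2 * (2^n * T) := by ring
      rw [h3]
      calc ENNReal.ofReal ((n+1 : ℕ) * δ) = ENNReal.ofReal (n * δ + δ) := by
            push_cast; ring_nf
        _ ≤ ENNReal.ofReal (n * δ) + ENNReal.ofReal δ := ENNReal.ofReal_add_le
        _ ≤ ψ (2^n * T) + ENNReal.ofReal δ := add_le_add_left ih _
        _ ≤ _ := h2
  intro C
  obtain ⟨n, hn⟩ := exists_nat_gt (C / δ)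
  refine ⟨2^n * T, le_mul_of_one_le_left (by linarith) (one_le_pow₀ one_le_two), fun t ht => ?_⟩
  have hC : C ≤ n * δ := by
    rw [div_lt_iff₀ hδ] at hn; linarith
  exact le_trans (le_trans (ENNReal.ofReal_le_ofReal hC) (key n)) (mono _ _ ht)


lemma my_growth (ψ : ℝ → ℝ≥0∞) (T₃ : ℝ) (hT₃ : 1 ≤ T₃)
    (mono : ∀ a b : ℝ, a ≤ b → ψ a ≤ ψ b) (κ η : ℝ) (hκ : 0 < κ) (hη : 0 < η)
    (rec : ∀ t, T₃ ≤ t → ENNReal.ofReal κ * ψ (t/4) ^ (1+η) ≤ ψ t)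
    (div : ∀ C : ℝ, ∃ T', T₃ ≤ T' ∧ ∀ t, T' ≤ t → ENNReal.ofReal C ≤ ψ t)
    (p C : ℝ) (hp : 0 < p) (hC : 0 < C) :
    ∃ T, 1 ≤ T ∧ ∀ t, T ≤ t → ENNReal.ofReal (C * t ^ p) ≤ ψ t := by
  set B : ℝ := max 1 ((4 ^ (p+1) / κ) ^ (1/η)) with hB
  have hB1 : (1:ℝ) ≤ B := le_max_left _ _
  have hB0 : (0:ℝ) < B := lt_of_lt_of_le one_pos hB1
  have hBκ : 4 ^ (p+1) ≤ κ * B ^ η := by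
    have h4 : (0:ℝ) < 4 ^ (p+1) / κ := by positivity
    have hle : (4 ^ (p+1) / κ) ^ (1/η) ≤ B := le_max_right _ _
    have h2 : ((4 ^ (p+1) / κ) ^ (1/η)) ^ η ≤ B ^ η :=
      Real.rpow_le_rpow (Real.rpow_nonneg h4.le _) hle hη.le
    rw [← Real.rpow_mul h4.le, one_div_mul_cancel hη.ne', Real.rpow_one] at h2
    rw [div_le_iff₀ hκ] at h2; linarith
  obtain ⟨T₄, hT₄T₃, hT₄⟩ := div B
  have hT₄1 : (1:ℝ) ≤ T₄ := le_trans hT₃ hT₄T₃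
  have hT₄0 : (0:ℝ) < T₄ := lt_of_lt_of_le one_pos hT₄1
  -- the inductive polynomial growth
  have P : ∀ n : ℕ, ∀ t, 4 ^ (n:ℝ) * T₄ ≤ t →
      ENNReal.ofReal (B * 4 ^ ((n:ℝ)*(p+1))) ≤ ψ t := by
    intro n
    induction n with
    | zero =>
      intro t ht
      simp only [Nat.cast_zero, Real.rpow_zero, one_mul, zero_mul, mul_one] at ht ⊢
      exact hT₄ t ht
    | succ n ih =>
      intro t ht
      have h4n : (1:ℝ) ≤ 4 ^ (n:ℝ) := Real.one_le_rpow (by norm_num) (Nat.cast_nonneg n)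
      have h4n1 : (1:ℝ) ≤ 4 ^ ((n:ℝ)+1) := Real.one_le_rpow (by norm_num) (by positivity)
      have hcast : ((n+1 : ℕ) : ℝ) = (n:ℝ) + 1 := by push_cast; ring
      rw [hcast] at ht ⊢
      have h4s : (4:ℝ) ^ ((n:ℝ)+1) = 4 * 4 ^ (n:ℝ) := by
        rw [Real.rpow_add (by norm_num : (0:ℝ) < 4), Real.rpow_one]; ring
      have htT₃ : T₃ ≤ t := by
        refine le_trans hT₄T₃ (le_trans ?_ ht)
        nlinarith
      have ht4 : 4 ^ (n:ℝ) * T₄ ≤ t / 4 := by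
        rw [h4s] at ht; linarith
      have hrec := rec t htT₃
      have hih := ih _ ht4
      have hXpos : (0:ℝ) < B * 4 ^ ((n:ℝ)*(p+1)) := by positivity
      have hpow : ENNReal.ofReal ((B * 4 ^ ((n:ℝ)*(p+1))) ^ (1+η)) ≤ ψ (t/4) ^ (1+η) := by
        rw [← ENNReal.ofReal_rpow_of_pos hXpos]
        exact ENNReal.rpow_le_rpow hih (by linarith)
      have hreal : B * 4 ^ (((n:ℝ)+1)*(p+1)) ≤ κ * (B * 4 ^ ((n:ℝ)*(p+1))) ^ (1+η) := by
        set X : ℝ := 4 ^ ((n:ℝ)*(p+1)) with hX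
        have hX1 : (1:ℝ) ≤ X := Real.one_le_rpow (by norm_num) (by positivity)
        have hmul : (B * X) ^ (1+η) = B ^ (1+η) * X ^ (1+η) :=
          Real.mul_rpow hB0.le (by positivity)
        have hBsplit : B ^ ((1:ℝ)+η) = B * B ^ η := by
          rw [Real.rpow_add hB0, Real.rpow_one]
        have hXmono : X ≤ X ^ (1+η) := by
          nth_rewrite 1 [← Real.rpow_one X]
          exact Real.rpow_le_rpow_of_exponent_le hX1 (by linarith)
        have hsplit : (4:ℝ) ^ (((n:ℝ)+1)*(p+1)) = X * 4 ^ (p+1) := by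
          rw [hX, ← Real.rpow_add (by norm_num : (0:ℝ) < 4)]
          congr 1; ring
        rw [hmul, hBsplit, hsplit]
        have hBη : (0:ℝ) < B ^ η := by positivity
        calc B * (X * 4 ^ (p+1)) = (4 ^ (p+1)) * (B * X) := by ring
          _ ≤ (κ * B ^ η) * (B * X) := by
              apply mul_le_mul_of_nonneg_right hBκ; positivity
          _ = κ * (B * (B ^ η * X)) := by ring
          _ ≤ κ * (B * (B ^ η * X ^ (1+η))) := by
              apply mul_le_mul_of_nonneg_left _ hκ.le
              apply mul_le_mul_of_nonneg_left _ hB0.le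
              exact mul_le_mul_of_nonneg_left hXmono hBη.le
          _ = κ * (B * B ^ η * X ^ (1+η)) := by ring
      calc ENNReal.ofReal (B * 4 ^ (((n:ℝ)+1)*(p+1)))
          ≤ ENNReal.ofReal (κ * (B * 4 ^ ((n:ℝ)*(p+1))) ^ (1+η)) :=
            ENNReal.ofReal_le_ofReal hreal
        _ = ENNReal.ofReal κ * ENNReal.ofReal ((B * 4 ^ ((n:ℝ)*(p+1))) ^ (1+η)) :=
            ENNReal.ofReal_mul hκ.le
        _ ≤ ENNReal.ofReal κ * ψ (t/4) ^ (1+η) := by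
            exact mul_le_mul_right hpow _
        _ ≤ ψ t := hrec
  -- extraction
  refine ⟨max (4*T₄) (C*(4*T₄)^(p+1)/B), le_trans (by linarith) (le_max_left _ _), fun t ht => ?_⟩
  have ht1 : 4*T₄ ≤ t := le_trans (le_max_left _ _) ht
  have ht2 : C*(4*T₄)^(p+1)/B ≤ t := le_trans (le_max_right _ _) ht
  have ht0 : (0:ℝ) < t := by linarith
  have htd : (1:ℝ) ≤ t / T₄ := by rw [le_div_iff₀ hT₄0]; linarith
  have htd0 : (0:ℝ) < t / T₄ := by linarith
  set n : ℕ := ⌊Real.logb 4 (t/T₄)⌋₊ with hn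
  have hlog0 : 0 ≤ Real.logb 4 (t/T₄) := Real.logb_nonneg (by norm_num) htd
  have hn1 : (n:ℝ) ≤ Real.logb 4 (t/T₄) := Nat.floor_le hlog0
  have hn2 : Real.logb 4 (t/T₄) < (n:ℝ) + 1 := Nat.lt_floor_add_one _
  have hrlogb : (4:ℝ) ^ Real.logb 4 (t/T₄) = t / T₄ :=
    Real.rpow_logb (by norm_num) (by norm_num) htd0
  have hlo : (4:ℝ) ^ (n:ℝ) ≤ t / T₄ := by
    rw [← hrlogb]
    exact Real.rpow_le_rpow_of_exponent_le (by norm_num) hn1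
  have hhi : t / T₄ < 4 ^ ((n:ℝ)+1) := by
    rw [← hrlogb]
    exact Real.rpow_lt_rpow_of_exponent_lt (by norm_num) hn2
  have happ : 4 ^ (n:ℝ) * T₄ ≤ t := by
    rw [← le_div_iff₀ hT₄0]; exact hlo
  refine le_trans (ENNReal.ofReal_le_ofReal ?_) (P n t happ)
  -- C * t^p ≤ B * 4^{n(p+1)}
  have h4n0 : (0:ℝ) < 4 ^ (n:ℝ) := by positivity
  have h4s : (4:ℝ) ^ ((n:ℝ)+1) = 4 * 4 ^ (n:ℝ) := by
    rw [Real.rpow_add (by norm_num : (0:ℝ) < 4), Real.rpow_one]; ring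
  have htlt : t < 4 * 4 ^ (n:ℝ) * T₄ := by
    rw [div_lt_iff₀ hT₄0, h4s] at hhi; linarith
  have hsplit : (4:ℝ) ^ ((n:ℝ)*(p+1)) = 4 ^ (n:ℝ) * (4 ^ (n:ℝ)) ^ p := by
    rw [show (n:ℝ)*(p+1) = (n:ℝ) + (n:ℝ)*p by ring,
      Real.rpow_add (by norm_num : (0:ℝ) < 4),
      Real.rpow_mul (by norm_num : (0:ℝ) ≤ 4)]
  have h4T : (0:ℝ) < 4*T₄ := by linarith
  have hsplit2 : (4*T₄) ^ (p+1) = (4*T₄)^p * (4*T₄) := by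
    rw [Real.rpow_add h4T, Real.rpow_one]
  have h4np : (0:ℝ) ≤ (4 ^ (n:ℝ))^p := by positivity
  have htp : t ^ p ≤ (4*T₄)^p * (4 ^ (n:ℝ))^p := by
    rw [← Real.mul_rpow (by positivity) (by positivity)]
    exact Real.rpow_le_rpow ht0.le (by nlinarith) hp.le
  have hkey : C * (4*T₄)^p ≤ B * 4 ^ (n:ℝ) := by
    have h1 : C * (4*T₄)^(p+1) ≤ B * t := by
      rw [div_le_iff₀ hB0] at ht2; linarith
    have h2 : B * t ≤ B * (4 * 4 ^ (n:ℝ) * T₄) := by nlinarith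
    rw [hsplit2] at h1
    nlinarith [Real.rpow_nonneg (le_of_lt h4T) p]
  calc C * t ^ p ≤ C * ((4*T₄)^p * (4 ^ (n:ℝ))^p) := mul_le_mul_of_nonneg_left htp hC.le
    _ = (C * (4*T₄)^p) * (4 ^ (n:ℝ))^p := by ring
    _ ≤ (B * 4 ^ (n:ℝ)) * (4 ^ (n:ℝ))^p := mul_le_mul_of_nonneg_right hkey h4np
    _ = B * (4 ^ (n:ℝ) * (4 ^ (n:ℝ))^p) := by ring
    _ = B * 4 ^ ((n:ℝ)*(p+1)) := by rw [hsplit]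


theorem mild_solution_eventually_large
    (d : ℕ) (hd : 1 ≤ d) (α β η : ℝ)
    (hα : α ∈ Set.Ioo (0 : ℝ) 2) (hβ : β ∈ Set.Ioo (0 : ℝ) 1)
    (hη : 0 < η) (hηc : η ≤ α / (β * d))
    (G : ℝ → EuclideanSpace ℝ (Fin d) → ℝ)
    (hGmeas : Measurable (Function.uncurry G))
    (hGnonneg : ∀ t x, 0 ≤ G t x)
    (c₁ : ℝ) (hc₁ : 0 < c₁)
    (hGlower : ∀ t : ℝ, 0 < t → ∀ x : EuclideanSpace ℝ (Fin d),
      c₁ * min (t ^ (-(β * d) / α)) (t ^ β / ‖x‖ ^ ((d : ℝ) + α)) ≤ G t x)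
    (V₀ : EuclideanSpace ℝ (Fin d) → ℝ)
    (hV₀meas : Measurable V₀) (hV₀nonneg : ∀ x, 0 ≤ V₀ x)
    (hV₀ne : ¬ (V₀ =ᵐ[volume] 0))
    (V : ℝ → EuclideanSpace ℝ (Fin d) → ℝ≥0∞)
    (hVmeas : Measurable (Function.uncurry V))
    (hmild : ∀ t : ℝ, 0 < t → ∀ x : EuclideanSpace ℝ (Fin d),
      V t x
        = (∫⁻ y, ENNReal.ofReal (G t (x - y)) * ENNReal.ofReal (V₀ y))
          + ∫⁻ s in Set.Ioo (0 : ℝ) t,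
              ∫⁻ y, ENNReal.ofReal (G (t - s) (x - y)) * (V s y) ^ (1 + η)) :
    ∀ M : ℝ, 0 < M → ∃ T₀ : ℝ, 0 < T₀ ∧
      ∀ t : ℝ, T₀ ≤ t → ∀ x : EuclideanSpace ℝ (Fin d), ‖x‖ ≤ t ^ (β / α) →
        ENNReal.ofReal M ≤ V t x := by
  haveI : Nonempty (Fin d) := ⟨⟨0, hd⟩⟩
  haveI : Nontrivial (EuclideanSpace ℝ (Fin d)) :=
    ⟨⟨0, EuclideanSpace.single ⟨0, hd⟩ 1, by
      intro h
      have := congrArg (fun v => v ⟨0, hd⟩) h.symm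
      simp [EuclideanSpace.single] at this⟩⟩
  obtain ⟨hα0, hα2⟩ := hα
  obtain ⟨hβ0, hβ1⟩ := hβ
  have hd0 : (0:ℝ) < d := by exact_mod_cast hd
  set γ : ℝ := β * d / α with hγdef
  have hγ0 : 0 < γ := by positivity
  have hηγ : η * γ ≤ 1 := by
    have h := mul_le_mul_of_nonneg_right hηc (le_of_lt hγ0)
    calc η * γ ≤ α / (β*(d:ℝ)) * γ := h
      _ = 1 := by rw [hγdef]; field_simp
  set cG : ℝ := c₁ * 2 ^ (-(β + (d:ℝ) + α)) with hcGdef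
  have hcG0 : 0 < cG := by positivity
  -- the kernel lower bound used everywhere
  have kernel : ∀ t : ℝ, 0 < t → ∀ u : ℝ, t/2 ≤ u → u ≤ t →
      ∀ z : EuclideanSpace ℝ (Fin d), z ≠ 0 → ‖z‖ ≤ 2 * t ^ (β/α) →
      cG * t ^ (-γ) ≤ G u z := by
    intro t ht u hu1 hu2 z hz hznorm
    have hu0 : 0 < u := by linarith
    have hz0 : 0 < ‖z‖ := norm_pos_iff.mpr hz
    have hda : (0:ℝ) < (d:ℝ) + α := by positivity
    have h1 : t ^ (-γ) ≤ u ^ (-γ) :=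
      Real.rpow_le_rpow_of_nonpos hu0 hu2 (by linarith)
    have htβα : (0:ℝ) < t ^ (β/α) := Real.rpow_pos_of_pos ht _
    have h2 : ‖z‖ ^ ((d:ℝ) + α) ≤ 2 ^ ((d:ℝ)+α) * t ^ (β*((d:ℝ)+α)/α) := by
      calc ‖z‖ ^ ((d:ℝ)+α) ≤ (2 * t ^ (β/α)) ^ ((d:ℝ)+α) :=
            Real.rpow_le_rpow (norm_nonneg z) hznorm hda.le
        _ = 2 ^ ((d:ℝ)+α) * (t ^ (β/α)) ^ ((d:ℝ)+α) :=
            Real.mul_rpow (by norm_num) htβα.le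
        _ = 2 ^ ((d:ℝ)+α) * t ^ (β*((d:ℝ)+α)/α) := by
            rw [← Real.rpow_mul ht.le]
            congr 1
            ring
    have h3 : (t/2) ^ β ≤ u ^ β :=
      Real.rpow_le_rpow (by positivity) (by linarith) hβ0.le
    have hid : 2 ^ (-(β+(d:ℝ)+α)) * t ^ (-γ) * (2 ^ ((d:ℝ)+α) * t ^ (β*((d:ℝ)+α)/α))
        = (t/2) ^ β := by
      rw [Real.div_rpow ht.le (by norm_num : (0:ℝ) ≤ 2)]
      rw [show (2:ℝ) ^ (-(β+(d:ℝ)+α)) * t ^ (-γ) * (2 ^ ((d:ℝ)+α) * t ^ (β*((d:ℝ)+α)/α))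
          = (2 ^ (-(β+(d:ℝ)+α)) * 2 ^ ((d:ℝ)+α)) * (t ^ (-γ) * t ^ (β*((d:ℝ)+α)/α)) from by ring]
      rw [← Real.rpow_add (by norm_num : (0:ℝ) < 2), ← Real.rpow_add ht]
      rw [show -(β+(d:ℝ)+α) + ((d:ℝ)+α) = -β from by ring]
      rw [show -γ + β*((d:ℝ)+α)/α = β from by rw [hγdef]; field_simp; ring]
      rw [Real.rpow_neg (by norm_num : (0:ℝ) ≤ 2)]
      ring
    have h4 : 2 ^ (-(β+(d:ℝ)+α)) * t ^ (-γ) ≤ u ^ β / ‖z‖ ^ ((d:ℝ)+α) := by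
      rw [le_div_iff₀ (Real.rpow_pos_of_pos hz0 _)]
      calc 2 ^ (-(β+(d:ℝ)+α)) * t ^ (-γ) * ‖z‖ ^ ((d:ℝ)+α)
          ≤ 2 ^ (-(β+(d:ℝ)+α)) * t ^ (-γ) * (2 ^ ((d:ℝ)+α) * t ^ (β*((d:ℝ)+α)/α)) := by
            apply mul_le_mul_of_nonneg_left h2
            positivity
        _ = (t/2) ^ β := hid
        _ ≤ u ^ β := h3
    have h5 : 2 ^ (-(β+(d:ℝ)+α)) * t ^ (-γ) ≤ u ^ (-γ) := by
      have h6 : (2:ℝ) ^ (-(β+(d:ℝ)+α)) ≤ 1 :=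
        Real.rpow_le_one_of_one_le_of_nonpos (by norm_num) (by linarith)
      nlinarith [Real.rpow_pos_of_pos ht (-γ)]
    have hmin : 2 ^ (-(β+(d:ℝ)+α)) * t ^ (-γ)
        ≤ min (u ^ (-(β * (d:ℝ)) / α)) (u ^ β / ‖z‖ ^ ((d:ℝ) + α)) := by
      refine le_min ?_ h4
      rw [show -(β * (d:ℝ)) / α = -γ from by rw [hγdef]; ring]
      exact h5
    calc cG * t ^ (-γ) = c₁ * (2 ^ (-(β+(d:ℝ)+α)) * t ^ (-γ)) := by
          rw [hcGdef]; ring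
      _ ≤ c₁ * min (u ^ (-(β * (d:ℝ)) / α)) (u ^ β / ‖z‖ ^ ((d:ℝ) + α)) := by
          exact mul_le_mul_of_nonneg_left hmin hc₁.le
      _ ≤ G u z := hGlower u hu0 z
  -- initial mass in a ball
  obtain ⟨R, hR1, hA0⟩ : ∃ R : ℝ, 1 ≤ R ∧
      0 < ∫⁻ y in Metric.ball (0:EuclideanSpace ℝ (Fin d)) R,
        ENNReal.ofReal (min (V₀ y) 1) := by
    set g : EuclideanSpace ℝ (Fin d) → ℝ≥0∞ := fun y => ENNReal.ofReal (min (V₀ y) 1) with hg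
    have hgmeas : Measurable g := (hV₀meas.min measurable_const).ennreal_ofReal
    have hftot : ∫⁻ y, g y ∂volume ≠ 0 := by
      intro h0
      apply hV₀ne
      have h1 : g =ᵐ[volume] 0 := (lintegral_eq_zero_iff hgmeas).mp h0
      filter_upwards [h1] with y hy
      simp only [hg, Pi.zero_apply, ENNReal.ofReal_eq_zero] at hy ⊢
      have h2 := hV₀nonneg y
      rcases le_or_gt (V₀ y) 0 with h3 | h3
      · linarith
      · exfalso
        have : (0:ℝ) < min (V₀ y) 1 := lt_min h3 one_pos
        linarith
    have hex : ∃ n : ℕ, 0 < ∫⁻ y in Metric.ball (0:EuclideanSpace ℝ (Fin d)) ((n:ℝ)+1), g y := by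
      by_contra hcon
      push_neg at hcon
      apply hftot
      have hU : (⋃ n : ℕ, Metric.ball (0:EuclideanSpace ℝ (Fin d)) ((n:ℝ)+1)) = Set.univ := by
        ext y
        simp only [Set.mem_iUnion, Metric.mem_ball, Set.mem_univ, iff_true]
        obtain ⟨n, hn⟩ := exists_nat_gt (dist y 0)
        exact ⟨n, by linarith⟩
      have h2 : ∫⁻ y, g y ∂volume = ∫⁻ y in ⋃ n : ℕ, Metric.ball (0:EuclideanSpace ℝ (Fin d)) ((n:ℝ)+1), g y := by
        rw [hU, Measure.restrict_univ]
      rw [h2]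
      have h3 := lintegral_iUnion_le (μ := (volume : Measure (EuclideanSpace ℝ (Fin d))))
        (fun n : ℕ => Metric.ball (0:EuclideanSpace ℝ (Fin d)) ((n:ℝ)+1)) g
      have h4 : ∀ n : ℕ, ∫⁻ y in Metric.ball (0:EuclideanSpace ℝ (Fin d)) ((n:ℝ)+1), g y = 0 :=
        fun n => le_antisymm (hcon n) zero_le
      simp only [h4, tsum_zero] at h3
      exact le_antisymm h3 zero_le
    obtain ⟨n, hn⟩ := hex
    exact ⟨(n:ℝ)+1, by push_cast; linarith [Nat.cast_nonneg (α := ℝ) n], hn⟩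
  set f : EuclideanSpace ℝ (Fin d) → ℝ≥0∞ := fun y => ENNReal.ofReal (min (V₀ y) 1) with hfdef
  set A : ℝ≥0∞ := ∫⁻ y in Metric.ball (0:EuclideanSpace ℝ (Fin d)) R, f y with hAdef
  have hAtop : A < ⊤ := by
    have h1 : A ≤ volume (Metric.ball (0:EuclideanSpace ℝ (Fin d)) R) := by
      rw [hAdef]
      calc ∫⁻ y in Metric.ball (0:EuclideanSpace ℝ (Fin d)) R, f y
          ≤ ∫⁻ _ in Metric.ball (0:EuclideanSpace ℝ (Fin d)) R, 1 := by
            apply lintegral_mono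
            intro y
            exact ENNReal.ofReal_le_one.mpr (min_le_right _ _)
        _ = volume (Metric.ball (0:EuclideanSpace ℝ (Fin d)) R) := by
            rw [setLIntegral_const, one_mul]
    exact lt_of_le_of_lt h1 measure_ball_lt_top
  set T₁ : ℝ := R ^ (α/β) with hT₁def
  have hT₁1 : 1 ≤ T₁ := Real.one_le_rpow hR1 (by positivity)
  have hRle : ∀ t : ℝ, T₁ ≤ t → R ≤ t ^ (β/α) := by
    intro t htt
    have hR0 : (0:ℝ) < R := by linarith
    have h1 : (R ^ (α/β)) ^ (β/α) ≤ t ^ (β/α) :=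
      Real.rpow_le_rpow (by positivity) htt (by positivity)
    rwa [← Real.rpow_mul hR0.le, show α/β*(β/α) = 1 from by field_simp, Real.rpow_one] at h1
  -- linear (heat semigroup) lower bound
  have linear : ∀ t : ℝ, T₁ ≤ t → ∀ x : EuclideanSpace ℝ (Fin d), ‖x‖ ≤ t ^ (β/α) →
      ENNReal.ofReal (cG * t ^ (-γ)) * A ≤ V t x := by
    intro t htt x hx
    have ht0 : (0:ℝ) < t := lt_of_lt_of_le (by linarith) htt
    have hRt := hRle t htt
    rw [hmild t ht0 x]
    refine le_trans ?_ le_self_add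
    have e1 : ENNReal.ofReal (cG * t ^ (-γ)) * A
        = ∫⁻ y in Metric.ball (0:EuclideanSpace ℝ (Fin d)) R,
            ENNReal.ofReal (cG * t ^ (-γ)) * f y := by
      rw [hAdef, lintegral_const_mul' _ _ ENNReal.ofReal_ne_top]
    rw [e1]
    refine le_trans (lintegral_mono_ae ?_) (setLIntegral_le_lintegral _ _)
    have hne : ∀ᵐ (y : EuclideanSpace ℝ (Fin d))
        ∂(volume.restrict (Metric.ball (0:EuclideanSpace ℝ (Fin d)) R)), y ≠ x := by
      refine ae_restrict_of_ae ?_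
      rw [ae_iff]
      simp only [ne_eq, not_not]
      rw [Set.setOf_eq_eq_singleton]
      exact measure_singleton x
    have hmem := ae_restrict_mem (μ := (volume : Measure (EuclideanSpace ℝ (Fin d))))
      (measurableSet_ball (x := (0:EuclideanSpace ℝ (Fin d))) (ε := R))
    filter_upwards [hne, hmem] with y hyx hyR
    have hxy : x - y ≠ 0 := sub_ne_zero.mpr (Ne.symm hyx)
    have hnorm : ‖x - y‖ ≤ 2 * t ^ (β/α) := by
      have h1 : ‖x - y‖ ≤ ‖x‖ + ‖y‖ := norm_sub_le x y
      have h2 : ‖y‖ < R := by rwa [Metric.mem_ball, dist_zero_right] at hyR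
      linarith
    have hker := kernel t ht0 t (by linarith) le_rfl (x - y) hxy hnorm
    exact mul_le_mul' (ENNReal.ofReal_le_ofReal hker)
      (ENNReal.ofReal_le_ofReal (min_le_left _ _))
  -- volume of balls
  set ω : ℝ≥0∞ := volume (Metric.ball (0:EuclideanSpace ℝ (Fin d)) 1) with hωdef
  have hω0 : ω ≠ 0 := (Metric.measure_ball_pos volume _ one_pos).ne'
  have hωtop : ω ≠ ⊤ := measure_ball_lt_top.ne
  set wr : ℝ := ω.toReal with hwrdef
  have hwr0 : 0 < wr := ENNReal.toReal_pos hω0 hωtop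
  have hωr : ω = ENNReal.ofReal wr := (ENNReal.ofReal_toReal hωtop).symm
  have hvol : ∀ s : ℝ, 0 < s →
      volume (Metric.ball (0:EuclideanSpace ℝ (Fin d)) (s ^ (β/α)))
        = ENNReal.ofReal (s ^ γ * wr) := by
    intro s hs
    rw [Measure.addHaar_ball_of_pos volume 0 (Real.rpow_pos_of_pos hs _)]
    have hexp : (s ^ (β/α)) ^ Module.finrank ℝ (EuclideanSpace ℝ (Fin d)) = s ^ γ := by
      rw [finrank_euclideanSpace_fin, ← Real.rpow_natCast (s ^ (β/α)) d,
        ← Real.rpow_mul hs.le, hγdef]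
      congr 1
      ring
    rw [hexp, ← hωdef, hωr, ← ENNReal.ofReal_mul (by positivity)]
  -- the space-integrated solution
  set F : ℝ → ℝ≥0∞ := fun s =>
    ∫⁻ y in Metric.ball (0:EuclideanSpace ℝ (Fin d)) (s ^ (β/α)), V s y with hFdef
  set c₀ : ℝ := cG * A.toReal * wr with hc₀def
  have hc₀0 : 0 < c₀ := by
    have := ENNReal.toReal_pos hA0.ne' hAtop.ne
    positivity
  have hF₀ : ∀ s : ℝ, T₁ ≤ s → ENNReal.ofReal c₀ ≤ F s := by
    intro s hss
    have hs0 : (0:ℝ) < s := by linarith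
    have hAr : A = ENNReal.ofReal A.toReal := (ENNReal.ofReal_toReal hAtop.ne).symm
    have key : ∀ y ∈ Metric.ball (0:EuclideanSpace ℝ (Fin d)) (s ^ (β/α)),
        ENNReal.ofReal (cG * s ^ (-γ)) * A ≤ V s y := by
      intro y hy
      exact linear s hss y (le_of_lt (by rwa [Metric.mem_ball, dist_zero_right] at hy))
    have hre : cG * s ^ (-γ) * A.toReal * (s ^ γ * wr) = c₀ := by
      rw [hc₀def, show cG * s ^ (-γ) * A.toReal * (s ^ γ * wr)
        = cG * A.toReal * wr * (s ^ (-γ) * s ^ γ) from by ring, ← Real.rpow_add hs0]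
      simp
    calc ENNReal.ofReal c₀
        = ENNReal.ofReal (cG * s ^ (-γ)) * A * ENNReal.ofReal (s ^ γ * wr) := by
          rw [hAr, ← ENNReal.ofReal_mul (by positivity), ← ENNReal.ofReal_mul (by positivity),
            hre]
      _ = ENNReal.ofReal (cG * s ^ (-γ)) * A
            * volume (Metric.ball (0:EuclideanSpace ℝ (Fin d)) (s ^ (β/α))) := by
          rw [hvol s hs0]
      _ = ∫⁻ _ in Metric.ball (0:EuclideanSpace ℝ (Fin d)) (s ^ (β/α)),
            ENNReal.ofReal (cG * s ^ (-γ)) * A := (setLIntegral_const _ _).symm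
      _ ≤ F s := setLIntegral_mono' measurableSet_ball key
  -- the key integral functional ψ
  set ψ : ℝ → ℝ≥0∞ := fun u =>
    ∫⁻ s in Set.Ioo T₁ u, ENNReal.ofReal s⁻¹ * (F s) ^ (1+η) with hψdef
  have hψmono : ∀ a b : ℝ, a ≤ b → ψ a ≤ ψ b := by
    intro a b hab
    exact lintegral_mono' (Measure.restrict_mono (Set.Ioo_subset_Ioo le_rfl hab) le_rfl) le_rfl
  -- Jensen/Hölder lower bound on the nonlinearity
  have hJen : ∀ s : ℝ, T₁ ≤ s →
      ENNReal.ofReal (s⁻¹ * wr ^ (-η)) * (F s) ^ (1+η)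
        ≤ ∫⁻ y in Metric.ball (0:EuclideanSpace ℝ (Fin d)) (s ^ (β/α)), (V s y) ^ (1+η) := by
    intro s hss
    have hs0 : (0:ℝ) < s := by linarith
    have hs1 : (1:ℝ) ≤ s := le_trans hT₁1 hss
    have hVm : AEMeasurable (V s)
        (volume.restrict (Metric.ball (0:EuclideanSpace ℝ (Fin d)) (s ^ (β/α)))) :=
      (hVmeas.comp (measurable_prodMk_left (x := s))).aemeasurable
    have hH := my_holder
      (volume.restrict (Metric.ball (0:EuclideanSpace ℝ (Fin d)) (s ^ (β/α)))) (V s) hVm η hη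
    rw [Measure.restrict_apply_univ] at hH
    rw [hvol s hs0] at hH
    have hm0 : (0:ℝ) < s ^ γ * wr := by positivity
    have h2 := mul_le_mul_left hH (ENNReal.ofReal ((s ^ γ * wr) ^ (-η)))
    have h3 : ENNReal.ofReal (s ^ γ * wr) ^ η * ENNReal.ofReal ((s ^ γ * wr) ^ (-η)) = 1 := by
      rw [ENNReal.ofReal_rpow_of_pos hm0, ← ENNReal.ofReal_mul (by positivity),
        ← Real.rpow_add hm0]
      simp
    rw [mul_assoc, h3, mul_one] at h2
    refine le_trans ?_ h2
    rw [mul_comm]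
    apply mul_le_mul_right
    apply ENNReal.ofReal_le_ofReal
    have he : (s ^ γ * wr) ^ (-η) = s ^ (γ * (-η)) * wr ^ (-η) := by
      rw [Real.mul_rpow (by positivity) hwr0.le, ← Real.rpow_mul hs0.le]
    rw [he]
    apply mul_le_mul_of_nonneg_right _ (by positivity)
    rw [← Real.rpow_neg_one s]
    apply Real.rpow_le_rpow_of_exponent_le hs1
    nlinarith
  -- nonlinear (Duhamel) lower bound
  have nonlinear : ∀ t : ℝ, 2*T₁ ≤ t → ∀ x : EuclideanSpace ℝ (Fin d), ‖x‖ ≤ t ^ (β/α) →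
      ENNReal.ofReal (cG * t ^ (-γ) * wr ^ (-η)) * ψ (t/2) ≤ V t x := by
    intro t htt x hx
    have ht0 : (0:ℝ) < t := by linarith
    rw [hmild t ht0 x]
    refine le_trans ?_ le_add_self
    have e1 : ENNReal.ofReal (cG * t ^ (-γ) * wr ^ (-η)) * ψ (t/2)
        = ∫⁻ s in Set.Ioo T₁ (t/2),
            ENNReal.ofReal (cG * t ^ (-γ)) * (ENNReal.ofReal (s⁻¹ * wr ^ (-η)) * (F s) ^ (1+η)) := by
      rw [hψdef, ← lintegral_const_mul' (ENNReal.ofReal (cG * t ^ (-γ) * wr ^ (-η))) _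
        ENNReal.ofReal_ne_top]
      refine setLIntegral_congr_fun measurableSet_Ioo (fun s hs => ?_)
      have hs0 : (0:ℝ) < s := lt_of_lt_of_le (by linarith) hs.1.le
      rw [← mul_assoc, ← mul_assoc, ← ENNReal.ofReal_mul (by positivity),
        ← ENNReal.ofReal_mul (by positivity)]
      congr 2
      ring
    rw [e1]
    calc ∫⁻ s in Set.Ioo T₁ (t/2),
            ENNReal.ofReal (cG * t ^ (-γ)) * (ENNReal.ofReal (s⁻¹ * wr ^ (-η)) * (F s) ^ (1+η))
        ≤ ∫⁻ s in Set.Ioo T₁ (t/2),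
            ∫⁻ y, ENNReal.ofReal (G (t - s) (x - y)) * (V s y) ^ (1 + η) := by
          refine setLIntegral_mono' measurableSet_Ioo fun s hs => ?_
          have hs0 : (0:ℝ) < s := lt_of_lt_of_le (by linarith) hs.1.le
          refine le_trans (mul_le_mul_right (hJen s hs.1.le) _) ?_
          rw [← lintegral_const_mul' _ _ ENNReal.ofReal_ne_top]
          refine le_trans (lintegral_mono_ae ?_) (setLIntegral_le_lintegral _ _)
          have hne : ∀ᵐ (y : EuclideanSpace ℝ (Fin d))
              ∂(volume.restrict (Metric.ball (0:EuclideanSpace ℝ (Fin d)) (s ^ (β/α)))),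
              y ≠ x := by
            refine ae_restrict_of_ae ?_
            rw [ae_iff]
            simp only [ne_eq, not_not]
            rw [Set.setOf_eq_eq_singleton]
            exact measure_singleton x
          have hmem := ae_restrict_mem (μ := (volume : Measure (EuclideanSpace ℝ (Fin d))))
            (measurableSet_ball (x := (0:EuclideanSpace ℝ (Fin d))) (ε := s ^ (β/α)))
          filter_upwards [hne, hmem] with y hyx hyB
          have hxy : x - y ≠ 0 := sub_ne_zero.mpr (Ne.symm hyx)
          have hsb : s ^ (β/α) ≤ t ^ (β/α) :=
            Real.rpow_le_rpow hs0.le (by linarith [hs.2]) (by positivity)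
          have hnorm : ‖x - y‖ ≤ 2 * t ^ (β/α) := by
            have h1 : ‖x - y‖ ≤ ‖x‖ + ‖y‖ := norm_sub_le x y
            have h2 : ‖y‖ < s ^ (β/α) := by
              rwa [Metric.mem_ball, dist_zero_right] at hyB
            linarith
          have hker := kernel t ht0 (t - s) (by linarith [hs.2]) (by linarith [hs.1])
            (x - y) hxy hnorm
          exact mul_le_mul_left (ENNReal.ofReal_le_ofReal hker) _
      _ ≤ ∫⁻ s in Set.Ioo 0 t,
            ∫⁻ y, ENNReal.ofReal (G (t - s) (x - y)) * (V s y) ^ (1 + η) := by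
          refine lintegral_mono' (Measure.restrict_mono
            (Set.Ioo_subset_Ioo (by linarith) (by linarith)) le_rfl) le_rfl
  set c₃ : ℝ := cG * wr ^ (-η) * wr with hc₃def
  have hc₃0 : 0 < c₃ := by positivity
  have hF₁ : ∀ s : ℝ, 2*T₁ ≤ s → ENNReal.ofReal c₃ * ψ (s/2) ≤ F s := by
    intro s hss
    have hs0 : (0:ℝ) < s := by linarith
    have hre : s ^ γ * wr * (cG * s ^ (-γ) * wr ^ (-η)) = c₃ := by
      rw [hc₃def, show s ^ γ * wr * (cG * s ^ (-γ) * wr ^ (-η))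
        = cG * wr ^ (-η) * wr * (s ^ γ * s ^ (-γ)) from by ring, ← Real.rpow_add hs0]
      simp
    have key : ∀ y ∈ Metric.ball (0:EuclideanSpace ℝ (Fin d)) (s ^ (β/α)),
        ENNReal.ofReal (cG * s ^ (-γ) * wr ^ (-η)) * ψ (s/2) ≤ V s y := by
      intro y hy
      exact nonlinear s hss y (le_of_lt (by rwa [Metric.mem_ball, dist_zero_right] at hy))
    calc ENNReal.ofReal c₃ * ψ (s/2)
        = ENNReal.ofReal (cG * s ^ (-γ) * wr ^ (-η)) * ψ (s/2)
            * ENNReal.ofReal (s ^ γ * wr) := by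
          rw [← hre, ENNReal.ofReal_mul (by positivity)]
          ring
      _ = ENNReal.ofReal (cG * s ^ (-γ) * wr ^ (-η)) * ψ (s/2)
            * volume (Metric.ball (0:EuclideanSpace ℝ (Fin d)) (s ^ (β/α))) := by
          rw [hvol s hs0]
      _ = ∫⁻ _ in Metric.ball (0:EuclideanSpace ℝ (Fin d)) (s ^ (β/α)),
            ENNReal.ofReal (cG * s ^ (-γ) * wr ^ (-η)) * ψ (s/2) := (setLIntegral_const _ _).symm
      _ ≤ F s := setLIntegral_mono' measurableSet_ball key
  -- divergence step
  have hstep : ∀ u : ℝ, T₁ ≤ u → ψ u + ENNReal.ofReal (c₀ ^ (1+η) / 2) ≤ ψ (2*u) := by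
    intro u hu
    have hu0 : (0:ℝ) < u := by linarith
    have hdisj : Disjoint (Set.Ioo T₁ u) (Set.Ioo u (2*u)) := by
      apply Set.disjoint_left.mpr
      rintro s ⟨_, h1⟩ ⟨h2, _⟩
      linarith
    have hsub : Set.Ioo T₁ u ∪ Set.Ioo u (2*u) ⊆ Set.Ioo T₁ (2*u) := by
      rintro s (⟨h1,h2⟩|⟨h1,h2⟩) <;> exact ⟨by linarith, by linarith⟩
    have hun : ψ u + (∫⁻ s in Set.Ioo u (2*u), ENNReal.ofReal s⁻¹ * (F s) ^ (1+η)) ≤ ψ (2*u) := by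
      rw [hψdef, ← lintegral_union measurableSet_Ioo hdisj]
      exact lintegral_mono' (Measure.restrict_mono hsub le_rfl) le_rfl
    refine le_trans (add_le_add_right ?_ (ψ u)) hun
    calc ENNReal.ofReal (c₀ ^ (1+η) / 2)
        = ENNReal.ofReal ((2*u)⁻¹ * c₀ ^ (1+η)) * volume (Set.Ioo u (2*u)) := by
          rw [Real.volume_Ioo, show 2*u - u = u from by ring,
            ← ENNReal.ofReal_mul (by positivity)]
          congr 1
          field_simp
      _ = ∫⁻ _ in Set.Ioo u (2*u), ENNReal.ofReal ((2*u)⁻¹ * c₀ ^ (1+η)) :=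
          (setLIntegral_const _ _).symm
      _ ≤ ∫⁻ s in Set.Ioo u (2*u), ENNReal.ofReal s⁻¹ * (F s) ^ (1+η) := by
          refine setLIntegral_mono' measurableSet_Ioo fun s hs => ?_
          rw [ENNReal.ofReal_mul (by positivity)]
          refine mul_le_mul' (ENNReal.ofReal_le_ofReal ?_) ?_
          · have hs0 : (0:ℝ) < s := by linarith [hs.1]
            have := hs.2.le
            exact inv_anti₀ hs0 this
          · rw [← ENNReal.ofReal_rpow_of_pos hc₀0]
            exact ENNReal.rpow_le_rpow (hF₀ s (le_trans hu hs.1.le)) (by linarith)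
  have hdiv := my_diverge ψ T₁ hT₁1 hψmono (c₀ ^ (1+η) / 2) (by positivity) hstep
  -- recursion
  have hrec : ∀ t : ℝ, 8*T₁ ≤ t →
      ENNReal.ofReal (c₃ ^ (1+η) / 2) * ψ (t/4) ^ (1+η) ≤ ψ t := by
    intro t htt
    have ht0 : (0:ℝ) < t := by linarith
    have hsub : Set.Ioo (t/2) t ⊆ Set.Ioo T₁ t := Set.Ioo_subset_Ioo (by linarith) le_rfl
    have h1 : (∫⁻ s in Set.Ioo (t/2) t, ENNReal.ofReal s⁻¹ * (F s) ^ (1+η)) ≤ ψ t := by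
      rw [hψdef]
      exact lintegral_mono' (Measure.restrict_mono hsub le_rfl) le_rfl
    refine le_trans ?_ h1
    have hc : ENNReal.ofReal (c₃ ^ (1+η) / 2)
        = ENNReal.ofReal (t⁻¹ * c₃ ^ (1+η)) * ENNReal.ofReal (t/2) := by
      rw [← ENNReal.ofReal_mul (by positivity)]
      congr 1
      field_simp
    calc ENNReal.ofReal (c₃ ^ (1+η) / 2) * ψ (t/4) ^ (1+η)
        = ENNReal.ofReal (t⁻¹ * c₃ ^ (1+η)) * ψ (t/4) ^ (1+η) * ENNReal.ofReal (t/2) := by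
          rw [hc]
          ring
      _ = ENNReal.ofReal (t⁻¹ * c₃ ^ (1+η)) * ψ (t/4) ^ (1+η) * volume (Set.Ioo (t/2) t) := by
          rw [Real.volume_Ioo, show t - t/2 = t/2 from by ring]
      _ = ∫⁻ _ in Set.Ioo (t/2) t, ENNReal.ofReal (t⁻¹ * c₃ ^ (1+η)) * ψ (t/4) ^ (1+η) :=
          (setLIntegral_const _ _).symm
      _ ≤ ∫⁻ s in Set.Ioo (t/2) t, ENNReal.ofReal s⁻¹ * (F s) ^ (1+η) := by
          refine setLIntegral_mono' measurableSet_Ioo fun s hs => ?_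
          have hs0 : (0:ℝ) < s := by linarith [hs.1]
          have hFs : ENNReal.ofReal c₃ * ψ (s/2) ≤ F s := hF₁ s (by linarith [hs.1])
          have hψs : ψ (t/4) ≤ ψ (s/2) := hψmono _ _ (by linarith [hs.1])
          rw [ENNReal.ofReal_mul (by positivity), mul_assoc]
          refine mul_le_mul' (ENNReal.ofReal_le_ofReal (inv_anti₀ hs0 ?_)) ?_
          · linarith [hs.2]
          · have h2 : ENNReal.ofReal (c₃ ^ (1+η)) * ψ (t/4) ^ (1+η)
                = (ENNReal.ofReal c₃ * ψ (t/4)) ^ (1+η) := by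
              rw [ENNReal.mul_rpow_of_nonneg _ _ (by linarith : (0:ℝ) ≤ 1+η),
                ENNReal.ofReal_rpow_of_pos hc₃0]
            rw [h2]
            exact ENNReal.rpow_le_rpow (le_trans (mul_le_mul_right hψs _) hFs) (by linarith)
  intro M hM
  set Cb : ℝ := M * 2 ^ γ * wr ^ η / cG with hCbdef
  have hCb0 : 0 < Cb := by positivity
  obtain ⟨T, hT1, hT⟩ := my_growth ψ (8*T₁) (by linarith) hψmono (c₃ ^ (1+η) / 2) η
    (by positivity) hη hrec
    (fun C => by
      obtain ⟨T', hT'1, hT'⟩ := hdiv C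
      exact ⟨max T' (8*T₁), le_max_right _ _, fun t ht => hT' t ((le_max_left _ _).trans ht)⟩)
    γ Cb hγ0 hCb0
  refine ⟨max (2*T) (2*T₁), by positivity, fun t ht x hx => ?_⟩
  have ht2T : 2*T ≤ t := le_trans (le_max_left _ _) ht
  have ht2T₁ : 2*T₁ ≤ t := le_trans (le_max_right _ _) ht
  have ht0 : (0:ℝ) < t := by linarith
  have hψt : ENNReal.ofReal (Cb * (t/2) ^ γ) ≤ ψ (t/2) := hT (t/2) (by linarith)
  refine le_trans ?_ (nonlinear t ht2T₁ x hx)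
  have e1 : t ^ γ ≠ 0 := (Real.rpow_pos_of_pos ht0 γ).ne'
  have e2 : (2:ℝ) ^ γ ≠ 0 := (Real.rpow_pos_of_pos two_pos γ).ne'
  have e3 : wr ^ η ≠ 0 := (Real.rpow_pos_of_pos hwr0 η).ne'
  have e4 : cG ≠ 0 := hcG0.ne'
  calc ENNReal.ofReal M
      = ENNReal.ofReal (cG * t ^ (-γ) * wr ^ (-η) * (Cb * (t/2) ^ γ)) := by
        congr 1
        rw [hCbdef, Real.div_rpow ht0.le (by norm_num : (0:ℝ) ≤ 2),
          Real.rpow_neg ht0.le, Real.rpow_neg hwr0.le]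
        field_simp
    _ = ENNReal.ofReal (cG * t ^ (-γ) * wr ^ (-η)) * ENNReal.ofReal (Cb * (t/2) ^ γ) :=
        ENNReal.ofReal_mul (by positivity)
    _ ≤ ENNReal.ofReal (cG * t ^ (-γ) * wr ^ (-η)) * ψ (t/2) := mul_le_mul_right hψt _
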